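/- For any σ_f > 0, ℓ > 0, any n ∈ ℕ, and any pairwise distinct points x₁, …, xₙ ∈ ℝ, the Gram matrix K(X,X) ∈ ℝ^{n×n} with entries K_{ij} = σ_f² · exp(−(x_i − x_j)²/(2ℓ²)) is positive definite, i.e., vᵀ K v > 0 for every nonzero v ∈ ℝⁿ; in particular K(X,X) is invertible. -/

import Mathlib

open Matrix

/-- The squared-exponential kernel `k(x,x') = σf² · exp(−(x−x')²/(2ℓ²))`. -/
noncomputable def sqExpKernel (σf ℓ x x' : ℝ) : ℝ :=
  σf ^ 2 * Real.exp (-(x - x') ^ 2 / (2 * ℓ ^ 2))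

private lemma real_exp_eq_tsum (y : ℝ) : Real.exp y = ∑' k : ℕ, y ^ k / Nat.factorial k := by
  rw [Real.exp_eq_exp_ℝ, NormedSpace.exp_eq_tsum_div]

/-- Strict positive definiteness of the exponential-of-product kernel. -/
private lemma exp_prod_gram_pos {n : ℕ} (a : ℝ) (ha : 0 < a) (x : Fin n → ℝ)
    (hx : Function.Injective x) (w : Fin n → ℝ) (hw : w ≠ 0) :
    0 < ∑ i, ∑ j, w i * w j * Real.exp (a * (x i * x j)) := by
  set f : Fin n → Fin n → ℕ → ℝ :=
    fun i j k => w i * w j * ((a * (x i * x j)) ^ k / Nat.factorial k) with hf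
  have hsum : ∀ i j : Fin n, Summable (f i j) := fun i j =>
    (Real.summable_pow_div_factorial (a * (x i * x j))).mul_left _
  set S : ℕ → ℝ := fun k => ∑ i, w i * x i ^ k with hS
  set g : ℕ → ℝ := fun k => a ^ k / Nat.factorial k * (S k) ^ 2 with hg
  have hexpand : ∀ k : ℕ, ∑ i, ∑ j, f i j k = g k := by
    intro k
    have e : ∀ i j : Fin n, f i j k
        = a ^ k / Nat.factorial k * ((w i * x i ^ k) * (w j * x j ^ k)) := by
      intro i j; simp only [hf, mul_pow]; ring
    calc ∑ i, ∑ j, f i j k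
        = ∑ i, ∑ j, a ^ k / Nat.factorial k * ((w i * x i ^ k) * (w j * x j ^ k)) :=
          Finset.sum_congr rfl fun i _ => Finset.sum_congr rfl fun j _ => e i j
      _ = a ^ k / Nat.factorial k * ((∑ i, w i * x i ^ k) * (∑ j, w j * x j ^ k)) := by
          rw [Finset.sum_mul_sum, Finset.mul_sum]
          exact Finset.sum_congr rfl fun i _ => by rw [Finset.mul_sum]
      _ = g k := by simp only [hg, hS]; ring
  have hgsum : Summable g := by
    have : Summable fun k => ∑ i, ∑ j, f i j k :=
      summable_sum fun i _ => summable_sum fun j _ => hsum i j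
    exact this.congr hexpand
  have hswap : ∑ i, ∑ j, w i * w j * Real.exp (a * (x i * x j)) = ∑' k, g k := by
    have hrw : ∀ i j : Fin n, w i * w j * Real.exp (a * (x i * x j)) = ∑' k, f i j k := by
      intro i j
      rw [real_exp_eq_tsum, tsum_mul_left]
    calc ∑ i, ∑ j, w i * w j * Real.exp (a * (x i * x j))
        = ∑ i, ∑' k, ∑ j, f i j k := by
          refine Finset.sum_congr rfl fun i _ => ?_
          rw [Summable.tsum_finsetSum fun j _ => hsum i j]
          exact Finset.sum_congr rfl fun j _ => hrw i j
      _ = ∑' k, ∑ i, ∑ j, f i j k :=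
          (Summable.tsum_finsetSum fun i _ => summable_sum fun j _ => hsum i j).symm
      _ = ∑' k, g k := tsum_congr hexpand
  rw [hswap]
  -- find k with S k ≠ 0 using the Vandermonde matrix
  have hvand : ∃ k : Fin n, S (k : ℕ) ≠ 0 := by
    by_contra h
    push_neg at h
    apply hw
    have hdet : (Matrix.vandermonde x).det ≠ 0 :=
      Matrix.det_vandermonde_ne_zero_iff.mpr hx
    apply Matrix.eq_zero_of_vecMul_eq_zero hdet
    funext k
    simpa [Matrix.vecMul, Matrix.vandermonde, dotProduct] using h k
  obtain ⟨k, hk⟩ := hvand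
  refine Summable.tsum_pos hgsum (fun i => ?_) (k : ℕ) ?_
  · exact mul_nonneg (div_nonneg (pow_nonneg ha.le _) (Nat.cast_nonneg _)) (sq_nonneg _)
  · exact mul_pos (div_pos (pow_pos ha _) (by positivity)) (by positivity)

/-- For any `σf > 0`, `ℓ > 0` and pairwise distinct points `x₁, …, xₙ ∈ ℝ`, the Gram
matrix with entries `K_{ij} = σf² · exp(−(x_i − x_j)²/(2ℓ²))` is positive definite,
i.e. `vᵀ K v > 0` for every nonzero `v`; in particular it is invertible. -/
theorem sqExp_gram_posDef (σf ℓ : ℝ) (hσf : 0 < σf) (hℓ : 0 < ℓ)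
    (n : ℕ) (x : Fin n → ℝ) (hx : Function.Injective x) :
    (Matrix.of fun i j : Fin n => sqExpKernel σf ℓ (x i) (x j)).PosDef ∧
    (∀ v : Fin n → ℝ, v ≠ 0 →
      0 < v ⬝ᵥ (Matrix.of fun i j : Fin n => sqExpKernel σf ℓ (x i) (x j)).mulVec v) ∧
    IsUnit (Matrix.of fun i j : Fin n => sqExpKernel σf ℓ (x i) (x j)).det := by
  set K : Matrix (Fin n) (Fin n) ℝ :=
    Matrix.of fun i j : Fin n => sqExpKernel σf ℓ (x i) (x j) with hK
  have hℓ2 : (ℓ : ℝ) ^ 2 ≠ 0 := by positivity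
  have hpos : ∀ v : Fin n → ℝ, v ≠ 0 → 0 < v ⬝ᵥ K.mulVec v := by
    intro v hv
    set w : Fin n → ℝ := fun i => v i * Real.exp (-(x i) ^ 2 / (2 * ℓ ^ 2)) with hwdef
    have hw : w ≠ 0 := by
      intro h
      apply hv
      funext i
      have := congrFun h i
      simp only [hwdef, Pi.zero_apply, mul_eq_zero] at this
      rcases this with h' | h'
      · exact h'
      · exact absurd h' (Real.exp_ne_zero _)
    have key : v ⬝ᵥ K.mulVec v
        = σf ^ 2 * ∑ i, ∑ j, w i * w j * Real.exp ((ℓ ^ 2)⁻¹ * (x i * x j)) := by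
      simp only [dotProduct, Matrix.mulVec, hK, Matrix.of_apply, sqExpKernel, hwdef]
      rw [Finset.mul_sum]
      refine Finset.sum_congr rfl fun i _ => ?_
      rw [Finset.mul_sum, Finset.mul_sum]
      refine Finset.sum_congr rfl fun j _ => ?_
      have : -(x i - x j) ^ 2 / (2 * ℓ ^ 2)
          = -(x i) ^ 2 / (2 * ℓ ^ 2) + -(x j) ^ 2 / (2 * ℓ ^ 2) + (ℓ ^ 2)⁻¹ * (x i * x j) := by
        field_simp
        ring
      rw [this, Real.exp_add, Real.exp_add]
      ring
    rw [key]
    exact mul_pos (by positivity)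
      (exp_prod_gram_pos ((ℓ ^ 2)⁻¹) (by positivity) x hx w hw)
  have hherm : K.IsHermitian := by
    rw [Matrix.IsHermitian]
    ext i j
    simp only [Matrix.conjTranspose_apply, hK, Matrix.of_apply, sqExpKernel, star_trivial]
    ring_nf
  have hposdef : K.PosDef := by
    rw [Matrix.posDef_iff_dotProduct_mulVec]
    refine ⟨hherm, fun v hv => ?_⟩
    simpa [star_trivial] using hpos v hv
  exact ⟨hposdef, hpos, hposdef.det_pos.ne'.isUnit⟩
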